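/- (Leave-one-out shortcut for kernel ridge regression.) Let m ≥ 2, let K be an m×m symmetric positive semidefinite real matrix, Y ∈ ℝ^{m×q}, λ > 0, and H = K(K + λI)⁻¹. Fix an index i. Let K^{(i)} be the (m−1)×(m−1) matrix obtained from K by deleting row i and column i, let Y^{(i)} ∈ ℝ^{(m−1)×q} be Y with row i deleted, and let κ_i ∈ ℝ^{m−1} be the i-th row of K with its i-th entry deleted. Then κ_iᵀ (K^{(i)} + λI)⁻¹ Y^{(i)} = (H_{i·} Y − H_{ii} Y_{i·}) / (1 − H_{ii}), where H_{i·} denotes the i-th row of H and Y_{i·} the i-th row of Y. -/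

import Mathlib

open Matrix

/-- leave-one-out shortcut for kernel ridge regression: training on the
`m−1` instances other than `i` and predicting at instance `i` gives
`(H_{i·} Y − H_{ii} Y_{i·}) / (1 − H_{ii})` where `H = K(K + λI)⁻¹`. -/
theorem two_step_krr_stmt12 {m q : ℕ} (hm : 2 ≤ m)
    (K : Matrix (Fin m) (Fin m) ℝ) (hK : K.PosSemidef)
    (Y : Matrix (Fin m) (Fin q) ℝ) (lam : ℝ) (hlam : 0 < lam) (i : Fin m)
    (H : Matrix (Fin m) (Fin m) ℝ) (hH : H = K * (K + lam • 1)⁻¹)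
    (Kdel : Matrix {x : Fin m // x ≠ i} {x : Fin m // x ≠ i} ℝ)
    (hKdel : Kdel = K.submatrix (fun x => x.val) (fun x => x.val))
    (Ydel : Matrix {x : Fin m // x ≠ i} (Fin q) ℝ)
    (hYdel : Ydel = Y.submatrix (fun x => x.val) id)
    (κ : {x : Fin m // x ≠ i} → ℝ) (hκ : κ = fun x => K i x.val) :
    κ ᵥ* ((Kdel + lam • 1)⁻¹ * Ydel)
      = fun j => ((H * Y) i j - H i i * Y i j) / (1 - H i i) := by
  classical
  set A : Matrix (Fin m) (Fin m) ℝ := K + lam • 1 with hAdef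
  set D : Matrix {x : Fin m // x ≠ i} {x : Fin m // x ≠ i} ℝ := Kdel + lam • 1 with hDdef
  have hone : ∀ {n : Type} [Fintype n] [DecidableEq n],
      ((lam • 1 : Matrix n n ℝ)).PosDef := by
    intro n _ _
    rw [smul_one_eq_diagonal]
    exact Matrix.PosDef.diagonal (fun _ => hlam)
  have hApd : A.PosDef := Matrix.PosDef.posSemidef_add hK hone
  have hKdelps : Kdel.PosSemidef := by rw [hKdel]; exact hK.submatrix _
  have hDpd : D.PosDef := Matrix.PosDef.posSemidef_add hKdelps hone
  have hAdet : IsUnit A.det := (Matrix.isUnit_iff_isUnit_det A).mp hApd.isUnit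
  have hDdet : IsUnit D.det := (Matrix.isUnit_iff_isUnit_det D).mp hDpd.isUnit
  have hKsym : ∀ a b, K a b = K b a := fun a b => by
    have := hK.isHermitian.apply b a
    simpa using this
  -- symmetry of A and A⁻¹
  have hAsym : Aᵀ = A := by
    ext a b
    simp [hAdef, transpose_apply, hKsym a b, Matrix.one_apply, eq_comm]
  set B : Matrix (Fin m) (Fin m) ℝ := A⁻¹ with hBdef
  have hBsym : ∀ a b, B a b = B b a := by
    intro a b
    have h : Bᵀ = B := by rw [hBdef, Matrix.transpose_nonsing_inv, hAsym]
    calc B a b = Bᵀ b a := rfl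
      _ = B b a := by rw [h]
  have hDsym : Dᵀ = D := by
    ext a b
    simp [hDdef, hKdel, transpose_apply, submatrix_apply, hKsym a.val b.val,
      Matrix.one_apply, eq_comm]
  have hDinvsym : D⁻¹ᵀ = D⁻¹ := by rw [Matrix.transpose_nonsing_inv, hDsym]
  -- the auxiliary vectors
  set b : {x : Fin m // x ≠ i} → ℝ := fun x => K i x.val with hbdef
  set u : {x : Fin m // x ≠ i} → ℝ := D⁻¹ *ᵥ b with hudef
  have hDu : D *ᵥ u = b := by
    rw [hudef, Matrix.mulVec_mulVec, Matrix.mul_nonsing_inv _ hDdet, Matrix.one_mulVec]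
  set w : Fin m → ℝ := fun k => if h : k = i then 1 else -(u ⟨k, h⟩) with hwdef
  -- A *ᵥ w vanishes off i
  have hAw0 : ∀ k, k ≠ i → (A *ᵥ w) k = 0 := by
    intro k hk
    have hsplit : (A *ᵥ w) k = A k i * w i + ∑ x ∈ Finset.univ \ {i}, A k x * w x := by
      rw [Matrix.mulVec, dotProduct]
      exact Finset.sum_eq_add_sum_sdiff_singleton_of_mem (Finset.mem_univ i) _
    have hsub : ∑ x ∈ Finset.univ \ {i}, A k x * w x
        = ∑ x : {x : Fin m // x ≠ i}, A k x.val * w x.val := by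
      have hmem : ∀ x : Fin m, x ∈ Finset.univ \ {i} ↔ x ≠ i := fun x => by simp
      exact Finset.sum_subtype _ hmem _
    have hterm : ∀ x : {x : Fin m // x ≠ i}, A k x.val * w x.val
        = D ⟨k, hk⟩ x * (-(u x)) := by
      intro x
      have hw : w x.val = -(u x) := by
        rw [hwdef]; simp [x.prop]
      have hA : A k x.val = D ⟨k, hk⟩ x := by
        simp [hAdef, hDdef, hKdel, submatrix_apply, Matrix.one_apply, Subtype.ext_iff]
      rw [hw, hA]
    have hsum2 : ∑ x : {x : Fin m // x ≠ i}, D ⟨k, hk⟩ x * (-(u x))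
        = -(D *ᵥ u) ⟨k, hk⟩ := by
      rw [Matrix.mulVec, dotProduct, ← Finset.sum_neg_distrib]
      exact Finset.sum_congr rfl (fun x _ => by ring)
    have hwi : w i = 1 := by rw [hwdef]; simp
    have hAki : A k i = K i k := by
      simp [hAdef, Matrix.one_apply, hk, hKsym k i]
    rw [hsplit, hsub, Finset.sum_congr rfl (fun x _ => hterm x), hsum2, hDu, hwi, hAki,
      hbdef]
    ring
  set s : ℝ := (A *ᵥ w) i with hsdef
  have hAwe : A *ᵥ w = fun k => if k = i then s else 0 := by
    funext k
    by_cases hk : k = i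
    · subst hk; simp [hsdef]
    · simp [hk, hAw0 k hk]
  have hwB : ∀ k, w k = B k i * s := by
    intro k
    have h1 : B *ᵥ (A *ᵥ w) = w := by
      rw [Matrix.mulVec_mulVec, hBdef, Matrix.nonsing_inv_mul _ hAdet, Matrix.one_mulVec]
    have h2 : (B *ᵥ (A *ᵥ w)) k = B k i * s := by
      rw [hAwe, Matrix.mulVec, dotProduct]
      rw [Finset.sum_eq_single i (fun x _ hx => by simp [hx]) (by simp)]
      simp
    rw [← h1, h2]
  have hBii : B i i * s = 1 := by
    have := hwB i
    rw [hwdef] at this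
    simpa using this.symm
  have hBii0 : B i i ≠ 0 := fun h => by simp [h] at hBii
  have hs0 : s ≠ 0 := fun h => by simp [h] at hBii
  -- H = 1 - lam • B
  have hHB : H = 1 - lam • B := by
    rw [hH, hBdef]
    have : K = A - lam • 1 := by rw [hAdef, add_sub_cancel_right]
    rw [this, Matrix.sub_mul, Matrix.mul_nonsing_inv _ hAdet, Matrix.smul_mul,
      Matrix.one_mul]
  have hHii : H i i = 1 - lam * B i i := by
    rw [hHB]; simp [Matrix.sub_apply, Matrix.one_apply]
  have hHY : ∀ j, (H * Y) i j = Y i j - lam * (B * Y) i j := by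
    intro j
    rw [hHB, Matrix.sub_mul, Matrix.one_mul]
    simp [Matrix.sub_apply, Matrix.smul_mul]
  -- compute u in terms of B
  have hu : ∀ x : {x : Fin m // x ≠ i}, u x = -(B x.val i * s) := by
    intro x
    have := hwB x.val
    rw [hwdef] at this
    simp only [x.prop, dif_neg, not_false_iff] at this
    linarith [this]
  -- LHS computation
  funext j
  have hLHS : (κ ᵥ* ((Kdel + lam • 1)⁻¹ * Ydel)) j
      = ∑ x : {x : Fin m // x ≠ i}, u x * Y x.val j := by
    rw [← hDdef, ← Matrix.vecMul_vecMul]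
    have hκD : κ ᵥ* D⁻¹ = u := by
      rw [← Matrix.mulVec_transpose, hDinvsym, hudef, hκ, hbdef]
    rw [hκD, Matrix.vecMul, dotProduct]
    exact Finset.sum_congr rfl (fun x _ => by rw [hYdel]; simp [submatrix_apply])
  have hsum3 : ∑ x : {x : Fin m // x ≠ i}, B i x.val * Y x.val j
      = (B * Y) i j - B i i * Y i j := by
    have : ∑ x ∈ Finset.univ \ {i}, B i x * Y x j
        = ∑ x : {x : Fin m // x ≠ i}, B i x.val * Y x.val j := by
      have hmem : ∀ x : Fin m, x ∈ Finset.univ \ {i} ↔ x ≠ i := fun x => by simp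
      exact Finset.sum_subtype _ hmem _
    rw [← this]
    have hfull : (B * Y) i j = B i i * Y i j + ∑ x ∈ Finset.univ \ {i}, B i x * Y x j := by
      rw [Matrix.mul_apply]
      exact Finset.sum_eq_add_sum_sdiff_singleton_of_mem (Finset.mem_univ i) _
    rw [hfull]; ring
  have hLHS2 : (κ ᵥ* ((Kdel + lam • 1)⁻¹ * Ydel)) j
      = -s * ((B * Y) i j - B i i * Y i j) := by
    rw [hLHS, ← hsum3, Finset.mul_sum]
    refine Finset.sum_congr rfl (fun x _ => ?_)
    rw [hu x, hBsym x.val i]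
    ring
  rw [hLHS2, hHY j, hHii]
  have h1H : 1 - (1 - lam * B i i) = lam * B i i := by ring
  rw [h1H]
  have hne : lam * B i i ≠ 0 := mul_ne_zero (ne_of_gt hlam) hBii0
  rw [eq_div_iff hne]
  linear_combination (lam * (B i i * Y i j - (B * Y) i j)) * hBii
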